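/- Let p be an odd prime, q = p^m, f a quadratic form on F_{q^{s₁}} of rank R and sign ε_f, H an r-dimensional F_q-subspace on which f restricts with rank R_H and sign ε_H. If R_H is even, then ∑_{x ∈ H} ζ_p^{Tr_p^q(f(x))} = ε_H · q^r · (p*)^{-m·R_H/2}, where p* = (-1)^{(p-1)/2} p. -/

import Mathlib

open Module
open AddChar MulChar

open AddChar MulChar in
private lemma addChar_map_sum' {A M : Type*} [AddCommMonoid A] [CommMonoid M] (ψ : AddChar A M)
    {ι : Type*} (s : Finset ι) (g : ι → A) : ψ (∑ i ∈ s, g i) = ∏ i ∈ s, ψ (g i) := by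
  classical
  induction s using Finset.induction_on with
  | empty => simp
  | insert a s h ih => simp [Finset.sum_insert h, Finset.prod_insert h,
      ψ.map_add_eq_mul, ih]

open AddChar MulChar in
private lemma sum_psi_sq' {F : Type*} [Field F] [Fintype F] [DecidableEq F] (hF : ringChar F ≠ 2)
    (ψ : AddChar F ℂ) (hψ : ψ.IsPrimitive)
    (χ : MulChar F ℂ) (hχ : χ = (quadraticChar F).ringHomComp (Int.castRingHom ℂ))
    (b : F) (hb : b ≠ 0) :
    ∑ x : F, ψ (b * x ^ 2) = χ b * gaussSum χ ψ := by
  classical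
  have step1 : ∑ x : F, ψ (b * x ^ 2)
      = ∑ a : F, (((quadraticChar F a : ℤ) : ℂ) + 1) * ψ (b * a) := by
    rw [← Finset.sum_fiberwise_of_maps_to' (g := fun x : F => x ^ 2)
      (fun x _ => Finset.mem_univ (x ^ 2)) (fun a : F => ψ (b * a))]
    refine Finset.sum_congr rfl fun a _ => ?_
    rw [Finset.sum_const, nsmul_eq_mul]
    congr 1
    have h := quadraticChar_card_sqrts hF a
    have : ({x : F | x ^ 2 = a}.toFinset.card : ℂ) = ((quadraticChar F a : ℤ) : ℂ) + 1 := by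
      exact_mod_cast congrArg (fun z : ℤ => (z : ℂ)) h
    rw [← this]
    congr 1
    simp [Set.toFinset_setOf]
  rw [step1]
  simp only [add_mul, one_mul, Finset.sum_add_distrib]
  have h0 : ∑ a : F, ψ (b * a) = 0 := by
    have : ∑ a : F, ψ (b * a) = ∑ a : F, (ψ.mulShift b) a := by
      simp [AddChar.mulShift_apply]
    rw [this]
    exact AddChar.sum_eq_zero_of_ne_one (hψ hb)
  rw [h0, add_zero]
  have hgs : ∑ a : F, ((quadraticChar F a : ℤ) : ℂ) * ψ (b * a)
      = gaussSum χ (ψ.mulShift b) := by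
    simp [gaussSum, hχ, AddChar.mulShift_apply, MulChar.ringHomComp]
  rw [hgs]
  have hu := gaussSum_mulShift χ ψ (Units.mk0 b hb)
  simp only [Units.val_mk0] at hu
  have hbb : χ b * χ b = 1 := by
    have hq : (quadraticChar F b) * (quadraticChar F b) = 1 := by
      rcases quadraticChar_dichotomy hb with h | h <;> rw [h] <;> norm_num
    have h2 : ((quadraticChar F b : ℤ) : ℂ) * ((quadraticChar F b : ℤ) : ℂ) = 1 := by
      exact_mod_cast congrArg (fun z : ℤ => (z : ℂ)) hq
    simpa [hχ, MulChar.ringHomComp_apply] using h2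
  calc gaussSum χ (ψ.mulShift b) = (χ b * χ b) * gaussSum χ (ψ.mulShift b) := by rw [hbb, one_mul]
    _ = χ b * (χ b * gaussSum χ (ψ.mulShift b)) := by ring
    _ = χ b * gaussSum χ ψ := by rw [hu]

private lemma calc_aux' (P : ℂ) (hP : P ≠ 0) (e m s k : ℕ) :
    (P ^ m) ^ s * ((-1 : ℂ) ^ (e * m) * P ^ m) ^ k
      = (P ^ m) ^ (s + (k + k)) * ((-1 : ℂ) ^ e * P) ^ (-((m * k : ℕ) : ℤ)) := by
  have hu : ((-1 : ℂ)) ^ (e * (m * k)) * ((-1 : ℂ)) ^ (e * (m * k)) = 1 := by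
    rw [← pow_add]; exact Even.neg_one_pow ⟨e * (m * k), rfl⟩
  have hPn : P ^ (m * k) ≠ 0 := pow_ne_zero _ hP
  rw [zpow_neg, zpow_natCast, mul_pow, mul_pow, ← pow_mul, ← pow_mul, ← pow_mul, ← pow_mul,
    mul_inv]
  have hinv : ((-1 : ℂ) ^ (e * (m * k)))⁻¹ = (-1 : ℂ) ^ (e * (m * k)) :=
    inv_eq_of_mul_eq_one_right hu
  rw [← pow_mul (-1 : ℂ) e (m * k), hinv]
  have he : e * m * k = e * (m * k) := by ring
  rw [he]
  field_simp
  rw [show m * (s + (k + k)) = m * s + m * k + m * k by ring, pow_add, pow_add]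
  ring


/-- `f` restricted to the subspace `H` (of dimension `r`) is a quadratic form of
rank `R` and sign `ε`. -/
def HasRankSignOn {F E : Type*} [Field F] [Fintype F] [DecidableEq F]
    [AddCommGroup E] [Module F E] (f : QuadraticForm F E) (H : Submodule F E)
    (r R : ℕ) (ε : ℤ) : Prop :=
  ∃ (hRr : R ≤ r) (b : Basis (Fin r) F H) (lam : Fin R → F),
    (∀ i, lam i ≠ 0) ∧
    (∀ x : H, f (x : E) = ∑ i : Fin R, lam i * (b.repr x (Fin.castLE hRr i)) ^ 2) ∧
    ε = quadraticChar F (∏ i, lam i)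

/-- If `f|_H` has even rank `R_H` and sign `ε_H` on the
`r`-dimensional subspace `H`, then
`∑_{x ∈ H} ζ_p^{Tr(f(x))} = ε_H q^r (p*)^{-m R_H/2}` with `p* = (-1)^{(p-1)/2} p`. -/
theorem stmt_9 (p : ℕ) [Fact p.Prime] (hp : p ≠ 2) (m : ℕ) (F : Type*)
    [Field F] [Fintype F] [DecidableEq F] [Algebra (ZMod p) F]
    (hcard : Fintype.card F = p ^ m)
    (E₁ : Type*) [AddCommGroup E₁] [Module F E₁] [Fintype E₁]
    (f : QuadraticForm F E₁) (H : Submodule F E₁)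
    [DecidablePred (fun x : E₁ => x ∈ H)]
    (r R : ℕ) (ε : ℤ)
    (hH : finrank F H = r) (hf : HasRankSignOn f H r R ε) (heven : Even R) :
    ∑ x : H, Complex.exp (2 * Real.pi * Complex.I / p)
        ^ (Algebra.trace (ZMod p) F (f (x : E₁))).val
      = (ε : ℂ) * (Fintype.card F : ℂ) ^ r
          * ((-1 : ℂ) ^ ((p - 1) / 2) * (p : ℂ)) ^ (-((m * R / 2 : ℕ) : ℤ)) := by
  classical
  obtain ⟨hRr, b, lam, hlam, hfx, hε⟩ := hf
  have hprime : p.Prime := Fact.out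
  have hp0 : p ≠ 0 := hprime.ne_zero
  have hp1 : 1 < p := hprime.one_lt
  haveI : NeZero p := ⟨hp0⟩
  haveI : Fact (1 < p) := ⟨hp1⟩
  have hch : CharP F p := charP_of_injective_algebraMap (algebraMap (ZMod p) F).injective p
  have hrc : ringChar F = p := ringChar.eq F p
  have hF2 : ringChar F ≠ 2 := by rw [hrc]; exact hp
  -- the additive character
  set ζ : ℂ := Complex.exp (2 * Real.pi * Complex.I / p) with hζdef
  have hζprim : IsPrimitiveRoot ζ p := Complex.isPrimitiveRoot_exp p hp0
  have hζp : ζ ^ p = 1 := hζprim.pow_eq_one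
  set ψ : AddChar F ℂ :=
    (AddChar.zmodChar p hζp).compAddMonoidHom (Algebra.trace (ZMod p) F).toAddMonoidHom
    with hψdef
  have hψapp : ∀ x : F, ψ x = ζ ^ (Algebra.trace (ZMod p) F x).val := fun x => rfl
  have hψne : ψ ≠ 1 := by
    obtain ⟨x, hx⟩ := Algebra.trace_surjective (ZMod p) F 1
    intro h
    have h1 : ψ x = 1 := by rw [h]; rfl
    rw [hψapp, hx, ZMod.val_one] at h1
    exact hζprim.ne_one hp1 (by rw [← h1, pow_one])
  have hψprim : ψ.IsPrimitive := AddChar.IsPrimitive.of_ne_one hψne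
  -- the multiplicative character
  set χ : MulChar F ℂ := (quadraticChar F).ringHomComp (Int.castRingHom ℂ) with hχdef
  have hχ1 : χ ≠ 1 :=
    (MulChar.ringHomComp_ne_one_iff (RingHom.injective_int _)).mpr (quadraticChar_ne_one hF2)
  have hχ2 : χ.IsQuadratic := (quadraticChar_isQuadratic F).comp _
  set G : ℂ := gaussSum χ ψ with hGdef
  have key : ∀ bb : F, bb ≠ 0 → ∑ x : F, ψ (bb * x ^ 2) = χ bb * G :=
    fun bb hbb => sum_psi_sq' hF2 ψ hψprim χ hχdef bb hbb
  -- rewrite the sum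
  have hsum1 : ∑ x : H, Complex.exp (2 * Real.pi * Complex.I / p)
        ^ (Algebra.trace (ZMod p) F (f (x : E₁))).val = ∑ x : H, ψ (f (x : E₁)) := rfl
  rw [hsum1]
  -- reindex by coordinates
  have hsum2 : ∑ x : H, ψ (f (x : E₁))
      = ∑ c : Fin r → F, ψ (∑ i : Fin R, lam i * (c (Fin.castLE hRr i)) ^ 2) := by
    refine Fintype.sum_equiv b.equivFun.toEquiv _ _ fun x => ?_
    congr 1
    rw [hfx x]
    refine Finset.sum_congr rfl fun i _ => ?_
    rw [LinearEquiv.coe_toEquiv, Basis.equivFun_apply]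
  rw [hsum2]
  -- split coordinates
  set ι : (Fin R ⊕ Fin (r - R)) ≃ Fin r :=
    finSumFinEquiv.trans (finCongr (Nat.add_sub_cancel' hRr)) with hιdef
  set D : ((Fin R → F) × (Fin (r - R) → F)) ≃ (Fin r → F) :=
    (Equiv.sumArrowEquivProdArrow (Fin R) (Fin (r - R)) F).symm.trans
      (Equiv.arrowCongr ι (Equiv.refl F)) with hDdef
  have hι : ∀ i : Fin R, ι (Sum.inl i) = Fin.castLE hRr i := by
    intro i
    apply Fin.ext
    simp [hιdef]
  have hD : ∀ (u : Fin R → F) (v : Fin (r - R) → F) (i : Fin R),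
      (D (u, v)) (Fin.castLE hRr i) = u i := by
    intro u v i
    have h1 : (D (u, v)) (ι (Sum.inl i)) = u i := by
      simp [hDdef, Equiv.arrowCongr]
    rwa [hι] at h1
  have hsum3 : ∑ c : Fin r → F, ψ (∑ i : Fin R, lam i * (c (Fin.castLE hRr i)) ^ 2)
      = ∑ z : (Fin R → F) × (Fin (r - R) → F),
          ψ (∑ i : Fin R, lam i * ((D z) (Fin.castLE hRr i)) ^ 2) :=
    (Equiv.sum_comp D _).symm
  rw [hsum3]
  rw [Fintype.sum_prod_type]
  have hsum4 : ∀ u : Fin R → F, ∀ v : Fin (r - R) → F,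
      ψ (∑ i : Fin R, lam i * ((D (u, v)) (Fin.castLE hRr i)) ^ 2)
        = ψ (∑ i : Fin R, lam i * (u i) ^ 2) := by
    intro u v
    congr 1
    exact Finset.sum_congr rfl fun i _ => by rw [hD u v i]
  have hsum5 : (∑ u : Fin R → F, ∑ v : Fin (r - R) → F,
      ψ (∑ i : Fin R, lam i * ((D (u, v)) (Fin.castLE hRr i)) ^ 2))
        = (Fintype.card F : ℂ) ^ (r - R) * ∑ u : Fin R → F, ψ (∑ i : Fin R, lam i * (u i) ^ 2) := by
    rw [Finset.mul_sum]
    refine Finset.sum_congr rfl fun u _ => ?_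
    rw [Finset.sum_congr rfl fun v _ => hsum4 u v, Finset.sum_const, nsmul_eq_mul]
    congr 1
    simp [Fintype.card_fun]
  rw [hsum5]
  -- factor as product of Gauss sums
  have hsum6 : ∑ u : Fin R → F, ψ (∑ i : Fin R, lam i * (u i) ^ 2)
      = ∏ i : Fin R, ∑ x : F, ψ (lam i * x ^ 2) := by
    rw [← Finset.sum_prod_piFinset Finset.univ (fun i x => ψ (lam i * x ^ 2))]
    rw [Fintype.piFinset_univ]
    exact Finset.sum_congr rfl fun u _ => addChar_map_sum' ψ _ _
  rw [hsum6]
  have hsum7 : ∏ i : Fin R, ∑ x : F, ψ (lam i * x ^ 2) = (ε : ℂ) * G ^ R := by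
    rw [Finset.prod_congr rfl fun i _ => key (lam i) (hlam i)]
    rw [Finset.prod_mul_distrib, Finset.prod_const, Finset.card_univ, Fintype.card_fin]
    congr 1
    rw [← map_prod χ lam Finset.univ, hε]
    simp [hχdef, MulChar.ringHomComp_apply]
  rw [hsum7]
  -- evaluate the Gauss sum power
  obtain ⟨k, hk⟩ := heven
  have hG2 : G ^ 2 = χ (-1) * (Fintype.card F : ℂ) := gaussSum_sq hχ1 hχ2 hψprim
  have hGR : G ^ R = (χ (-1) * (Fintype.card F : ℂ)) ^ k := by
    rw [hk, ← two_mul, pow_mul, hG2]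
  have hpodd : p % 2 = 1 := Nat.odd_iff.mp (hprime.odd_of_ne_two hp)
  have hp2 : p / 2 = (p - 1) / 2 := by omega
  have hχneg : χ (-1) = (-1 : ℂ) ^ ((p - 1) / 2 * m) := by
    have h4 : quadraticChar F (-1) = ZMod.χ₄ (Fintype.card F) := quadraticChar_neg_one hF2
    have h5 : (ZMod.χ₄ (Fintype.card F) : ℤ) = ((-1 : ℤ) ^ ((p - 1) / 2)) ^ m := by
      rw [hcard]
      rw [show ((p ^ m : ℕ) : ZMod 4) = ((p : ℕ) : ZMod 4) ^ m by push_cast; ring]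
      rw [map_pow]
      rw [ZMod.χ₄_eq_neg_one_pow hpodd, hp2]
    have : χ (-1) = ((quadraticChar F (-1) : ℤ) : ℂ) := by
      simp [hχdef, MulChar.ringHomComp_apply]
    rw [this, h4, h5]
    push_cast
    rw [← pow_mul]
  -- final computation
  have hm2 : m * R / 2 = m * k := by
    rw [hk, show m * (k + k) = 2 * (m * k) by ring, Nat.mul_div_cancel_left _ (by norm_num)]
  have hqC : (Fintype.card F : ℂ) = (p : ℂ) ^ m := by rw [hcard]; push_cast; ring
  have hPC : (p : ℂ) ≠ 0 := Nat.cast_ne_zero.mpr hp0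
  have hr : r = (r - R) + (k + k) := by omega
  rw [hGR, hχneg, hm2]
  calc (Fintype.card F : ℂ) ^ (r - R) * ((ε : ℂ) * ((-1 : ℂ) ^ ((p - 1) / 2 * m)
          * (Fintype.card F : ℂ)) ^ k)
      = (ε : ℂ) * ((Fintype.card F : ℂ) ^ (r - R)
          * ((-1 : ℂ) ^ ((p - 1) / 2 * m) * (Fintype.card F : ℂ)) ^ k) := by ring
    _ = (ε : ℂ) * ((Fintype.card F : ℂ) ^ ((r - R) + (k + k))
          * ((-1 : ℂ) ^ ((p - 1) / 2) * (p : ℂ)) ^ (-((m * k : ℕ) : ℤ))) := by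
        rw [hqC]; rw [calc_aux' (p : ℂ) hPC ((p - 1) / 2) m (r - R) k]
    _ = (ε : ℂ) * (Fintype.card F : ℂ) ^ r
          * ((-1 : ℂ) ^ ((p - 1) / 2) * (p : ℂ)) ^ (-((m * k : ℕ) : ℤ)) := by
        rw [← hr]; ring
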